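/- arXiv:2001.02273 — 6 statements merged into one kernel-verified Lean document; each statement's English description precedes it below -/
import Mathlib

section
/- Let p₁,...,p_t ∈ (0,1) satisfy (1-p₁)^k = p₁p₂⋯p_{k-1}(1-p_k) for all 2 ≤ k ≤ t and (1-p₁)^{t+1} = p₁p₂⋯p_t. Then 1/2 > p₁ > p₂ > ⋯ > p_t > 1/3. -/
lemma aux_gsum (q : ℝ) : ∀ n : ℕ, (1 - q) * ∑ j ∈ Finset.Icc 1 n, q ^ j = q - q ^ (n + 1) := by
  intro n
  induction n with
  | zero => simp
  | succ m ih =>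
    rw [Finset.sum_Icc_succ_top (by omega : 1 ≤ m + 1)]
    ring_nf
    ring_nf at ih
    linear_combination ih

/-- If p₁,...,p_t ∈ (0,1) satisfy (1-p₁)^k = p₁⋯p_{k-1}(1-p_k) for 2 ≤ k ≤ t and
(1-p₁)^{t+1} = p₁⋯p_t, then 1/2 > p₁ > p₂ > ⋯ > p_t > 1/3. -/
theorem stmt_3 (t : ℕ) (ht : 2 ≤ t) (p : ℕ → ℝ)
    (hmem : ∀ k : ℕ, 1 ≤ k → k ≤ t → p k ∈ Set.Ioo (0 : ℝ) 1)
    (heq1 : ∀ k : ℕ, 2 ≤ k → k ≤ t →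
      (1 - p 1) ^ k = (∏ i ∈ Finset.Icc 1 (k - 1), p i) * (1 - p k))
    (heq2 : (1 - p 1) ^ (t + 1) = ∏ i ∈ Finset.Icc 1 t, p i) :
    p 1 < 1 / 2 ∧ (∀ k : ℕ, 1 ≤ k → k < t → p (k + 1) < p k) ∧ 1 / 3 < p t := by
  obtain ⟨q, hqdef⟩ : ∃ q : ℝ, q = 1 - p 1 := ⟨_, rfl⟩
  rw [← hqdef] at heq1 heq2
  obtain ⟨hp1pos, hp1lt⟩ := hmem 1 le_rfl (by omega)
  have hq0 : 0 < q := by rw [hqdef]; linarith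
  have hq1 : q < 1 := by rw [hqdef]; linarith
  -- products are positive
  have hPpos : ∀ k : ℕ, k ≤ t → 0 < ∏ i ∈ Finset.Icc 1 k, p i := by
    intro k hk
    apply Finset.prod_pos
    intro i hi
    simp only [Finset.mem_Icc] at hi
    exact (hmem i hi.1 (le_trans hi.2 hk)).1
  -- P_k = 1 - S_k
  have hA : ∀ k : ℕ, k ≤ t →
      (∏ i ∈ Finset.Icc 1 k, p i) = 1 - ∑ j ∈ Finset.Icc 1 k, q ^ j := by
    intro k
    induction k with
    | zero => intro _; simp
    | succ n ih =>
      intro hkt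
      rcases Nat.eq_zero_or_pos n with h0 | h1
      · subst h0
        simp
        rw [hqdef]; ring
      · have hih := ih (by omega)
        have heq := heq1 (n + 1) (by omega) hkt
        simp only [Nat.add_sub_cancel] at heq
        rw [Finset.prod_Icc_succ_top (by omega : 1 ≤ n + 1),
          Finset.sum_Icc_succ_top (by omega : 1 ≤ n + 1)]
        linear_combination hih + heq
  -- key identity : 2q = 1 + q^(t+2)
  have hkey : 2 * q = 1 + q ^ (t + 2) := by
    have hG := aux_gsum q (t + 1)
    rw [Finset.sum_Icc_succ_top (by omega : 1 ≤ t + 1)] at hG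
    have hAt := hA t le_rfl
    linear_combination -hG + (1 - q) * hAt + (1 - q) * heq2
  have hqhalf : 1 / 2 < q := by
    have := pow_pos hq0 (t + 2)
    linarith
  -- closed form for products
  have hPform : ∀ k : ℕ, k ≤ t →
      (1 - q) * (∏ i ∈ Finset.Icc 1 k, p i) = q ^ (k + 1) - q ^ (t + 2) := by
    intro k hk
    have hAk := hA k hk
    have hGk := aux_gsum q k
    linear_combination (1 - q) * hAk - hGk - hkey
  have h1q : 0 < 1 - q := by linarith
  refine ⟨by linarith, ?_, ?_⟩
  · -- monotonicity
    intro k hk1 hkt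
    obtain ⟨m, rfl⟩ : ∃ m, k = m + 1 := ⟨k - 1, by omega⟩
    obtain ⟨a, hadef⟩ : ∃ a : ℝ, a = ∏ i ∈ Finset.Icc 1 m, p i := ⟨_, rfl⟩
    obtain ⟨b, hbdef⟩ : ∃ b : ℝ, b = ∏ i ∈ Finset.Icc 1 (m + 1), p i := ⟨_, rfl⟩
    obtain ⟨c, hcdef⟩ : ∃ c : ℝ, c = ∏ i ∈ Finset.Icc 1 (m + 2), p i := ⟨_, rfl⟩
    have ha : 0 < a := hadef ▸ hPpos m (by omega)
    have hb : 0 < b := hbdef ▸ hPpos (m + 1) (by omega)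
    have hPa := hPform m (by omega)
    have hPb := hPform (m + 1) (by omega)
    have hPc := hPform (m + 2) (by omega)
    rw [← hadef] at hPa
    rw [← hbdef] at hPb
    rw [← hcdef] at hPc
    have hba : b = a * p (m + 1) := by
      rw [hbdef, hadef, Finset.prod_Icc_succ_top (by omega : 1 ≤ m + 1)]
    have hcb : c = b * p (m + 2) := by
      rw [hcdef, hbdef]
      exact Finset.prod_Icc_succ_top (by omega : 1 ≤ m + 2) _
    have hQpos : 0 < q ^ (t + 2) * q ^ (m + 1) * (1 - q) ^ 2 := by positivity
    have h2 : ((1 - q) * c) * ((1 - q) * a) < ((1 - q) * b) * ((1 - q) * b) := by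
      rw [hPa, hPb, hPc]
      have e : (q ^ (m + 2 + 1) - q ^ (t + 2)) * (q ^ (m + 1) - q ^ (t + 2)) =
          (q ^ (m + 1 + 1) - q ^ (t + 2)) * (q ^ (m + 1 + 1) - q ^ (t + 2)) -
            q ^ (t + 2) * q ^ (m + 1) * (1 - q) ^ 2 := by ring
      linarith [hQpos, e]
    have hsq : (0 : ℝ) < (1 - q) ^ 2 := by positivity
    have key : c * a < b * b := by nlinarith [h2, hsq]
    rw [hcb, hba] at key
    have hppos1 : 0 < p (m + 1) := (hmem (m + 1) (by omega) (by omega)).1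
    nlinarith [key, mul_pos (mul_pos ha ha) hppos1]
  · -- p t > 1/3
    obtain ⟨m, rfl⟩ : ∃ m, t = m + 1 := ⟨t - 1, by omega⟩
    obtain ⟨a, hadef⟩ : ∃ a : ℝ, a = ∏ i ∈ Finset.Icc 1 m, p i := ⟨_, rfl⟩
    obtain ⟨b, hbdef⟩ : ∃ b : ℝ, b = ∏ i ∈ Finset.Icc 1 (m + 1), p i := ⟨_, rfl⟩
    have ha : 0 < a := hadef ▸ hPpos m (by omega)
    have hPa := hPform m (by omega)
    have hPb := hPform (m + 1) le_rfl
    rw [← hadef] at hPa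
    rw [← hbdef] at hPb
    have hba : b = a * p (m + 1) := by
      rw [hbdef, hadef, Finset.prod_Icc_succ_top (by omega : 1 ≤ m + 1)]
    have hqm : 0 < q ^ (m + 1) := pow_pos hq0 _
    have h3 : (1 - q) * a < (1 - q) * (3 * b) := by
      have e : (1 - q) * (3 * b) = 3 * ((1 - q) * b) := by ring
      rw [hPa, e, hPb]
      have e2 : q ^ (m + 1) - q ^ (m + 1 + 2) =
          3 * (q ^ (m + 1 + 1) - q ^ (m + 1 + 2)) - q ^ (m + 1) * (2 * q - 1) * (1 - q) := by
        ring
      linarith [mul_pos (mul_pos hqm (by linarith : (0:ℝ) < 2 * q - 1)) h1q, e2]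
    have h4 : a < 3 * b := by nlinarith [h3, h1q]
    rw [hba] at h4
    nlinarith [h4, ha]
end

section
/- Let p₁,...,p_t ∈ (0,1) satisfy (1-p₁)^k = p₁p₂⋯p_{k-1}(1-p_k) for 2 ≤ k ≤ t and (1-p₁)^{t+1} = p₁p₂⋯p_t. Then p₁ satisfies the telescoping identity p₁² = (1-p₁)² - (1-p₁)^{t+2}, i.e., p₁ = Σ_{i=2}^{t+1} (1-p₁)^i. -/
/-- Under the same system of equations, p₁ satisfies the telescoping identity
p₁² = (1-p₁)² - (1-p₁)^{t+2}, i.e. p₁ = Σ_{i=2}^{t+1} (1-p₁)^i. -/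
theorem stmt_4 (t : ℕ) (ht : 2 ≤ t) (p : ℕ → ℝ)
    (hmem : ∀ k : ℕ, 1 ≤ k → k ≤ t → p k ∈ Set.Ioo (0 : ℝ) 1)
    (heq1 : ∀ k : ℕ, 2 ≤ k → k ≤ t →
      (1 - p 1) ^ k = (∏ i ∈ Finset.Icc 1 (k - 1), p i) * (1 - p k))
    (heq2 : (1 - p 1) ^ (t + 1) = ∏ i ∈ Finset.Icc 1 t, p i) :
    (p 1) ^ 2 = (1 - p 1) ^ 2 - (1 - p 1) ^ (t + 2) ∧
    p 1 = ∑ i ∈ Finset.Icc 2 (t + 1), (1 - p 1) ^ i := by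
  set q := 1 - p 1 with hq
  have tele : ∀ (f : ℕ → ℝ) (a b : ℕ), a ≤ b + 1 →
      ∑ k ∈ Finset.Icc a b, (f k - f (k + 1)) = f a - f (b + 1) := by
    intro f a b hab
    rw [← Finset.Ico_add_one_right_eq_Icc, Finset.sum_Ico_eq_sum_range]
    have hadd : ∀ k : ℕ, f (a + k + 1) = f (a + (k + 1)) := fun k => by rw [add_assoc]
    simp only [hadd]
    rw [Finset.sum_range_sub' (fun i => f (a + i))]
    rw [show a + (b + 1 - a) = b + 1 by omega]
    simp
  have key : ∀ k, 2 ≤ k → k ≤ t →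
      q ^ k = (∏ i ∈ Finset.Icc 1 (k - 1), p i) - (∏ i ∈ Finset.Icc 1 k, p i) := by
    intro k h2 hk
    have hprod : ∏ i ∈ Finset.Icc 1 k, p i = (∏ i ∈ Finset.Icc 1 (k - 1), p i) * p k := by
      have hk1 : k - 1 + 1 = k := by omega
      rw [← hk1, Finset.prod_Icc_succ_top (by omega)]
      rw [hk1]
    rw [heq1 k h2 hk, hprod]; ring
  have hsum : p 1 = ∑ i ∈ Finset.Icc 2 (t + 1), q ^ i := by
    rw [Finset.sum_Icc_succ_top (by omega : 2 ≤ t + 1)]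
    have h1 : ∑ i ∈ Finset.Icc 2 t, q ^ i
        = ∑ k ∈ Finset.Icc 2 t, ((fun k => ∏ i ∈ Finset.Icc 1 (k - 1), p i) k
            - (fun k => ∏ i ∈ Finset.Icc 1 (k - 1), p i) (k + 1)) := by
      refine Finset.sum_congr rfl fun k hk => ?_
      simp only [Finset.mem_Icc] at hk
      have := key k hk.1 hk.2
      simpa using this
    rw [h1, tele _ 2 t (by omega)]
    have h2 : (fun k => ∏ i ∈ Finset.Icc 1 (k - 1), p i) 2 = p 1 := by simp
    have h3 : (fun k => ∏ i ∈ Finset.Icc 1 (k - 1), p i) (t + 1) = q ^ (t + 1) := by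
      simp [heq2]
    simp only [show (2:ℕ) - 1 = 1 from rfl, Nat.add_sub_cancel, ← heq2,
      Finset.Icc_self, Finset.prod_singleton]
    ring
  have hp1q : p 1 = 1 - q := by rw [hq]; ring
  have hsq : p 1 ^ 2 = q ^ 2 - q ^ (t + 2) := by
    have h0 : p 1 ^ 2 = p 1 * ∑ i ∈ Finset.Icc 2 (t + 1), q ^ i := by
      rw [← hsum]; ring
    rw [h0, Finset.mul_sum]
    have h1 : ∀ i, p 1 * q ^ i = (fun i => q ^ i) i - (fun i => q ^ i) (i + 1) := by
      intro i; simp only; rw [hp1q]; ring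
    rw [Finset.sum_congr rfl fun i _ => h1 i, tele _ 2 (t + 1) (by omega)]
  exact ⟨hsq, hsum⟩
end

section
/- For each integer t ≥ 1, the polynomial equation x^{t+2} - 2x + 1 = 0 has a unique root x* in the open interval (1/2, 1), and writing x* = 1/2 + δ_t, the quantity δ_t satisfies δ_t ≤ 2^{-(t+1)}. -/
open Set

lemma my_nat_ineq (t : ℕ) (ht : 2 ≤ t) : t + 2 ≤ 2 ^ t := by
  induction t, ht using Nat.le_induction with
  | base => norm_num
  | succ n hn ih =>
    have h1 := ih
    have h2 : 1 ≤ 2 ^ n := Nat.one_le_two_pow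
    calc n + 1 + 2 ≤ (n + 2) + 2 ^ n := by omega
      _ ≤ 2 ^ n + 2 ^ n := by omega
      _ = 2 ^ (n + 1) := by ring

lemma my_pow_le_four (t : ℕ) (ht : 1 ≤ t) :
    (1 + (1/2 : ℝ) ^ t) ^ (t + 2) ≤ 4 := by
  rcases eq_or_lt_of_le ht with h1 | h2
  · rw [← h1]; norm_num
  · have hn : (t + 2 : ℕ) ≤ 2 ^ t := my_nat_ineq t h2
    have hx : (1 + (1/2:ℝ)^t) ≤ Real.exp ((1/2:ℝ)^t) := by
      have := Real.add_one_le_exp ((1/2:ℝ)^t); linarith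
    have h0 : (0:ℝ) ≤ 1 + (1/2:ℝ)^t := by positivity
    calc (1 + (1/2:ℝ)^t)^(t+2) ≤ (Real.exp ((1/2:ℝ)^t))^(t+2) :=
          pow_le_pow_left₀ h0 hx _
      _ = Real.exp ((t+2) * (1/2:ℝ)^t) := by
          rw [← Real.exp_nat_mul]; norm_num
      _ ≤ Real.exp 1 := by
          apply Real.exp_le_exp.2
          have h2t : ((t:ℝ) + 2) ≤ 2 ^ t := by exact_mod_cast hn
          have hp : (0:ℝ) < 2 ^ t := by positivity
          rw [div_pow, one_pow, mul_div_assoc', mul_one, div_le_one hp]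
          linarith
      _ ≤ 4 := by
          have := Real.exp_one_lt_d9
          linarith

lemma my_conv_lt (n : ℕ) (hn : 2 ≤ n) {a b c : ℝ} (ha : 0 ≤ a) (hab : a < b) (hbc : b < c)
    (hfa : a ^ n - 2*a + 1 ≤ 0) (hfc : c ^ n - 2*c + 1 ≤ 0) : b ^ n - 2*b + 1 < 0 := by
  have hconv : StrictConvexOn ℝ (Ici (0:ℝ)) fun x : ℝ => x ^ n - 2*x + 1 := by
    have h1 := strictConvexOn_pow hn
    have h2 : ConvexOn ℝ (Ici (0:ℝ)) fun x : ℝ => -2*x + 1 := by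
      refine ⟨convex_Ici 0, ?_⟩
      intro x _ y _ p q hp hq hpq
      simp only [smul_eq_mul]
      nlinarith
    have h3 := h1.add_convexOn h2
    have heq : (fun x : ℝ => x ^ n - 2*x + 1) = ((fun x : ℝ => x ^ n) + fun x : ℝ => -2*x + 1) := by
      funext x; simp [Pi.add_apply]; ring
    rw [heq]; exact h3
  have hac : 0 < c - a := by linarith
  set p : ℝ := (c - b) / (c - a) with hp
  set q : ℝ := (b - a) / (c - a) with hq
  have hp0 : 0 < p := by apply div_pos <;> linarith
  have hq0 : 0 < q := by apply div_pos <;> linarith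
  have hpq : p + q = 1 := by
    rw [hp, hq, ← add_div, div_eq_one_iff_eq (by linarith : c - a ≠ 0)]
    ring
  have hcomb : p • a + q • c = b := by
    rw [hp, hq, smul_eq_mul, smul_eq_mul]
    field_simp
    ring
  have hmem_a : a ∈ Ici (0:ℝ) := ha
  have hmem_c : c ∈ Ici (0:ℝ) := by simp only [mem_Ici]; linarith
  have hne : a ≠ c := by linarith
  have key := hconv.2 hmem_a hmem_c hne hp0 hq0 hpq
  rw [hcomb] at key
  simp only [smul_eq_mul] at key
  nlinarith

/-- For each t ≥ 1, the equation x^{t+2} - 2x + 1 = 0 has a unique root in (1/2, 1),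
and writing that root as 1/2 + δ_t, one has δ_t ≤ 2^{-(t+1)}. -/
theorem stmt_7 (t : ℕ) (ht : 1 ≤ t) :
    (∃! x : ℝ, x ∈ Set.Ioo (1 / 2 : ℝ) 1 ∧ x ^ (t + 2) - 2 * x + 1 = 0) ∧
    ∀ x : ℝ, x ∈ Set.Ioo (1 / 2 : ℝ) 1 → x ^ (t + 2) - 2 * x + 1 = 0 →
      x - 1 / 2 ≤ (1 / 2 : ℝ) ^ (t + 1) := by
  have hn2 : 2 ≤ t + 2 := by omega
  obtain ⟨x0, hx0def⟩ : ∃ x0 : ℝ, x0 = 1/2 + (1/2 : ℝ)^(t+1) := ⟨_, rfl⟩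
  have hpos : (0:ℝ) < (1/2:ℝ)^(t+1) := by positivity
  have hx0lb : (1/2 : ℝ) < x0 := by rw [hx0def]; linarith
  have hx0ub : x0 ≤ 3/4 := by
    have h14 : (1/2:ℝ)^(t+1) ≤ (1/2:ℝ)^2 := by
      apply pow_le_pow_of_le_one (by norm_num) (by norm_num); omega
    rw [hx0def]; nlinarith
  have hfx0 : x0 ^ (t+2) - 2*x0 + 1 ≤ 0 := by
    have key : x0 ^ (t+2) ≤ (1/2:ℝ)^t := by
      have hx0eq : x0 = (1 + (1/2:ℝ)^t) / 2 := by
        rw [hx0def, pow_succ]; ring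
      rw [hx0eq, div_pow, div_le_iff₀ (by positivity)]
      calc (1 + (1/2:ℝ)^t)^(t+2) ≤ 4 := my_pow_le_four t ht
        _ ≤ (1/2:ℝ)^t * 2^(t+2) := by
            rw [div_pow, one_pow, pow_add]
            rw [div_mul_eq_mul_div, le_div_iff₀ (by positivity)]
            ring_nf
            nlinarith [pow_pos (show (0:ℝ) < 2 by norm_num) t]
    have heq : 2 * x0 - 1 = (1/2:ℝ)^t := by
      rw [hx0def, pow_succ]; ring
    linarith
  have hf1 : (1:ℝ) ^ (t+2) - 2*1 + 1 ≤ 0 := by norm_num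
  have hroot_le : ∀ x : ℝ, x ∈ Set.Ioo (1/2 : ℝ) 1 → x ^ (t+2) - 2*x + 1 = 0 → x ≤ x0 := by
    intro x hx hfx
    by_contra h
    push_neg at h
    have := my_conv_lt (t+2) hn2 (le_of_lt (lt_trans (by norm_num) hx0lb)) h hx.2 hfx0 hf1
    linarith
  constructor
  · have hcont : ContinuousOn (fun x : ℝ => x ^ (t+2) - 2*x + 1) (Icc (1/2 : ℝ) x0) := by
      fun_prop
    have hf12 : (0:ℝ) < (1/2:ℝ) ^ (t+2) - 2*(1/2) + 1 := by
      have : (0:ℝ) < (1/2:ℝ)^(t+2) := by positivity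
      linarith
    have hIVT := intermediate_value_Icc' (le_of_lt hx0lb) hcont
    have h0mem : (0:ℝ) ∈ Icc (x0 ^ (t+2) - 2*x0 + 1) ((1/2:ℝ) ^ (t+2) - 2*(1/2) + 1) :=
      ⟨hfx0, le_of_lt hf12⟩
    obtain ⟨c, hc, hfc⟩ := hIVT h0mem
    have hfc2 : c ^ (t+2) - 2*c + 1 = 0 := hfc
    have hc1 : (1/2:ℝ) < c := by
      rcases eq_or_lt_of_le hc.1 with h | h
      · exfalso; rw [← h] at hfc2; linarith
      · exact h
    have hcIoo : c ∈ Set.Ioo (1/2 : ℝ) 1 := ⟨hc1, by linarith [hc.2]⟩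
    refine ⟨c, ⟨hcIoo, hfc2⟩, ?_⟩
    intro y ⟨hyIoo, hfy⟩
    by_contra hne
    rcases lt_or_gt_of_ne hne with hlt | hgt
    · have := my_conv_lt (t+2) hn2 (by linarith [hyIoo.1] : (0:ℝ) ≤ y) hlt hcIoo.2 (le_of_eq hfy) hf1
      linarith
    · have := my_conv_lt (t+2) hn2 (by linarith [hcIoo.1] : (0:ℝ) ≤ c) hgt hyIoo.2 (le_of_eq hfc2) hf1
      linarith
  · intro x hx hfx
    have := hroot_le x hx hfx
    rw [hx0def] at this
    linarith
end

section
/- Let X = (X₁,...,Xₙ) be a random vector with values in a finite set, and suppose Y is constructed by choosing an index I uniformly at random from {0,...,n-1}, keeping X₁,...,X_I, and resampling the remaining coordinates from their conditional distribution given X₁,...,X_I (independently of X_{I+1},...,Xₙ). Then for any real-valued function f, Var(f(X)) ≤ (n/2)·E[(f(X) - f(Y))²]. -/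
open Classical in
/-- The probability mass of the set of configurations agreeing with x on the first
i coordinates. -/
noncomputable def prefixMass {S : Type*} [Fintype S] (n : ℕ)
    (p : (Fin n → S) → ℝ) (i : ℕ) (x : Fin n → S) : ℝ :=
  ∑ z : Fin n → S, if (∀ j : Fin n, (j : ℕ) < i → z j = x j) then p z else 0

open Classical in
/-- Let X be a random vector with mass function p on a finite state space, and let Y be
obtained by choosing I uniformly in {0,...,n-1}, keeping X₁,...,X_I and resampling the
remaining coordinates from their conditional distribution given the kept prefix,
independently of the rest of X. Then Var(f(X)) ≤ (n/2)·E[(f(X) - f(Y))²]. -/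
theorem stmt_13 {S : Type*} [Fintype S] (n : ℕ) (hn : 0 < n)
    (p : (Fin n → S) → ℝ) (hp : ∀ x, 0 ≤ p x) (hp1 : ∑ x : Fin n → S, p x = 1)
    (f : (Fin n → S) → ℝ) :
    ∑ x : Fin n → S, p x * (f x - ∑ z : Fin n → S, p z * f z) ^ 2 ≤
      (n / 2 : ℝ) *
        ((1 / n : ℝ) * ∑ i ∈ Finset.range n, ∑ x : Fin n → S, ∑ y : Fin n → S,
          p x * (if (∀ j : Fin n, (j : ℕ) < i → y j = x j)
                  then p y / prefixMass n p i x else 0) * (f x - f y) ^ 2) := by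
  classical
  set μ : ℝ := ∑ z : Fin n → S, p z * f z with hμ
  set T : ℕ → ℝ := fun i => ∑ x : Fin n → S, ∑ y : Fin n → S,
      p x * (if (∀ j : Fin n, (j : ℕ) < i → y j = x j)
              then p y / prefixMass n p i x else 0) * (f x - f y) ^ 2 with hT
  have hMnonneg : ∀ i x, 0 ≤ prefixMass n p i x := by
    intro i x
    apply Finset.sum_nonneg
    intro z _
    split_ifs
    · exact hp z
    · exact le_refl 0
  -- nonnegativity of each T i
  have hTnonneg : ∀ i ∈ Finset.range n, (0:ℝ) ≤ T i := by
    intro i _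
    apply Finset.sum_nonneg; intro x _
    apply Finset.sum_nonneg; intro y _
    apply mul_nonneg
    apply mul_nonneg (hp x)
    · split_ifs
      · exact div_nonneg (hp y) (hMnonneg i x)
      · exact le_refl 0
    · exact sq_nonneg _
  -- prefixMass at 0 is 1
  have hM0 : ∀ x, prefixMass n p 0 x = 1 := by
    intro x
    simp [prefixMass, Nat.not_lt_zero, hp1]
  -- the i = 0 term equals 2 * Var
  have ha : ∑ x : Fin n → S, p x * (f x - μ) = 0 := by
    have : ∑ x : Fin n → S, p x * (f x - μ)
        = (∑ x : Fin n → S, p x * f x) - (∑ x : Fin n → S, p x) * μ := by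
      rw [Finset.sum_mul]
      rw [← Finset.sum_sub_distrib]
      exact Finset.sum_congr rfl (fun x _ => by ring)
    rw [this, hp1, ← hμ]; ring
  have hT0 : T 0 = 2 * ∑ x : Fin n → S, p x * (f x - μ) ^ 2 := by
    have h1 : T 0 = ∑ x : Fin n → S, ∑ y : Fin n → S, p x * p y * (f x - f y) ^ 2 := by
      rw [hT]
      refine Finset.sum_congr rfl (fun x _ => Finset.sum_congr rfl (fun y _ => ?_))
      simp [Nat.not_lt_zero, hM0 x]
    rw [h1]
    have h2 : ∀ x y : Fin n → S, p x * p y * (f x - f y) ^ 2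
        = (p x * (f x - μ) ^ 2) * p y + p x * (p y * (f y - μ) ^ 2)
          - 2 * ((p x * (f x - μ)) * (p y * (f y - μ))) := by
      intro x y; ring
    calc ∑ x : Fin n → S, ∑ y : Fin n → S, p x * p y * (f x - f y) ^ 2
        = ∑ x : Fin n → S, ((p x * (f x - μ) ^ 2) * (∑ y : Fin n → S, p y)
            + p x * (∑ y : Fin n → S, p y * (f y - μ) ^ 2)
            - 2 * ((p x * (f x - μ)) * (∑ y : Fin n → S, p y * (f y - μ)))) := by
          refine Finset.sum_congr rfl (fun x _ => ?_)
          simp only [Finset.mul_sum]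
          rw [← Finset.sum_add_distrib, ← Finset.sum_sub_distrib]
          exact Finset.sum_congr rfl (fun y _ => by ring)
      _ = ∑ x : Fin n → S, ((p x * (f x - μ) ^ 2)
            + p x * (∑ y : Fin n → S, p y * (f y - μ) ^ 2)) := by
          refine Finset.sum_congr rfl (fun x _ => ?_)
          rw [hp1, ha]; ring
      _ = 2 * ∑ x : Fin n → S, p x * (f x - μ) ^ 2 := by
          rw [Finset.sum_add_distrib, ← Finset.sum_mul, hp1]; ring
  -- single term bound
  have hsum : T 0 ≤ ∑ i ∈ Finset.range n, T i :=
    Finset.single_le_sum hTnonneg (Finset.mem_range.mpr hn)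
  have hne : (n:ℝ) ≠ 0 := Nat.cast_ne_zero.mpr hn.ne'
  have : (n / 2 : ℝ) * ((1 / n : ℝ) * ∑ i ∈ Finset.range n, T i)
      = (1/2) * ∑ i ∈ Finset.range n, T i := by
    field_simp
  rw [this]
  calc ∑ x : Fin n → S, p x * (f x - μ) ^ 2 = (1/2) * T 0 := by rw [hT0]; ring
    _ ≤ (1/2) * ∑ i ∈ Finset.range n, T i := by linarith [hsum]
end

section
/- Let G be the type-(s,t) bipartite graph on [n] ∪ [n]', with an edge between i and j' if and only if -s ≤ j - i ≤ t. Suppose vertices 1,...,i-1 have been matched to distinct right-vertices forming a partial matching extendable to a perfect matching, and suppose after matching, the unmatched right-vertices are {v₁' < ⋯ < v_{n-i+1}'} with v₁ > i - s. Then matching i+k-1 to v_k' for each 1 ≤ k ≤ n-i+1 yields a perfect matching of G (i.e., the partial matching is completable greedily). -/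
lemma strictMono_gap {m : ℕ} (v : Fin m → ℕ) (hmono : StrictMono v) :
    ∀ d : ℕ, ∀ a b : Fin m, (a : ℕ) + d = (b : ℕ) → v a + d ≤ v b := by
  intro d
  induction d with
  | zero => intro a b h; simp [Fin.ext (by omega : (a:ℕ) = b)]
  | succ d ih =>
    intro a b h
    have hb' : (a : ℕ) + d < m := by omega
    have := ih a ⟨(a:ℕ)+d, hb'⟩ rfl
    have hlt : v ⟨(a:ℕ)+d, hb'⟩ < v b := hmono (by simp [Fin.lt_def]; omega)
    omega

/-- In the type-(s,t) bipartite graph on [n] ∪ [n]' (edge between i and j' iff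
-s ≤ j - i ≤ t), suppose vertices 1,...,i-1 have been matched and the unmatched
right-vertices are v₁' < ⋯ < v_{n-i+1}' with v₁ > i - s. Then matching the left
vertex i+k-1 to v_k' for 1 ≤ k ≤ n-i+1 yields a perfect matching: the assignment
is injective and every pair satisfies the band constraint -s ≤ v_k - (i+k-1) ≤ t. -/
theorem stmt_16 (s t n i : ℕ) (hs : 1 ≤ s) (ht : 1 ≤ t) (hi : 1 ≤ i) (hin : i ≤ n + 1)
    (v : Fin (n - i + 1) → ℕ) (hmono : StrictMono v)
    (hrange : ∀ k, 1 ≤ v k ∧ v k ≤ n)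
    (hv1 : (i : ℤ) - (s : ℤ) < (v ⟨0, Nat.succ_pos _⟩ : ℤ)) :
    Function.Injective v ∧
    ∀ k : Fin (n - i + 1),
      -(s : ℤ) ≤ (v k : ℤ) - ((i : ℤ) + (k : ℕ)) ∧
      (v k : ℤ) - ((i : ℤ) + (k : ℕ)) ≤ (t : ℤ) := by
  refine ⟨hmono.injective, fun k => ?_⟩
  have hk : (k : ℕ) < n - i + 1 := k.isLt
  have h1 : v ⟨0, Nat.succ_pos _⟩ + (k : ℕ) ≤ v k :=
    strictMono_gap v hmono (k : ℕ) _ k (by simp)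
  have h2 : v k + (n - i - (k : ℕ)) ≤ v ⟨n - i, by omega⟩ :=
    strictMono_gap v hmono (n - i - (k : ℕ)) k _ (by simp; omega)
  have h3 := (hrange ⟨n - i, by omega⟩).2
  have h4 : i ≤ n + 1 := hin
  constructor
  · omega
  · omega
end

section
/- Every permutation π of [n] satisfying -t ≤ π(i) - i ≤ 1 for all i is a product of disjoint cycles, each of which acts on a set of consecutive integers {a, a+1, ..., a+k} with k ≤ t, cyclically shifting them (π(a+j) = a+j+1 for j < k and π(a+k) = a). -/
/-- `IsConsecBlockCycles n π L` says the permutation π of [n] is the product of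
disjoint cycles on consecutive blocks of sizes given by the list L: the k-th block
occupies positions [ (L.take k).sum, (L.take (k+1)).sum ), and π cyclically shifts
each block (π(j) = j + 1 inside a block, and the last element maps to the first). -/
def IsConsecBlockCycles (n : ℕ) (π : Equiv.Perm (Fin n)) (L : List ℕ) : Prop :=
  L.sum = n ∧ (∀ ℓ ∈ L, 1 ≤ ℓ) ∧
  ∀ k < L.length, ∀ j : ℕ, (L.take k).sum ≤ j → j < (L.take (k + 1)).sum →
    ∀ hj : j < n,
      (π ⟨j, hj⟩ : ℕ) = if j + 1 < (L.take (k + 1)).sum then j + 1 else (L.take k).sum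

lemma aux_blocks (n t : ℕ) (π : Equiv.Perm (Fin n))
    (hπ : ∀ i : Fin n, -(t : ℤ) ≤ (π i : ℤ) - (i : ℤ) ∧ (π i : ℤ) - (i : ℤ) ≤ 1)
    (s : ℕ) (hs : s ≤ n)
    (hmap : ∀ i : Fin n, s ≤ (π i : ℕ) ↔ s ≤ (i : ℕ)) :
    ∃ L : List ℕ, L.sum = n - s ∧ (∀ ℓ ∈ L, 1 ≤ ℓ ∧ ℓ ≤ t + 1) ∧
      ∀ k < L.length, ∀ j : ℕ, s + (L.take k).sum ≤ j → j < s + (L.take (k + 1)).sum →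
        ∀ hj : j < n,
          (π ⟨j, hj⟩ : ℕ) =
            if j + 1 < s + (L.take (k + 1)).sum then j + 1 else s + (L.take k).sum := by
  rcases eq_or_lt_of_le hs with heq | hlt
  · exact ⟨[], by simp [heq], by simp, by simp⟩
  · set M : Fin n := π.symm ⟨s, hlt⟩ with hM
    have hMlt : (M : ℕ) < n := M.isLt
    have hπM : π M = ⟨s, hlt⟩ := π.apply_symm_apply _
    have hπMv : (π M : ℕ) = s := by rw [hπM]
    have hsM : s ≤ (M : ℕ) := (hmap M).mp (by omega)
    have hstep : ∀ j : ℕ, s ≤ j → j < (M : ℕ) → ∀ hj : j < n, (π ⟨j, hj⟩ : ℕ) = j + 1 := by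
      intro j
      induction j using Nat.strong_induction_on with
      | _ j ih =>
        intro hsj hjM hj
        have h1 := (hπ ⟨j, hj⟩).2
        simp only [Fin.val_mk] at h1
        have h1' : (π ⟨j, hj⟩ : ℕ) ≤ j + 1 := by omega
        by_contra hne
        have h3 : s ≤ (π ⟨j, hj⟩ : ℕ) := (hmap _).mpr hsj
        rcases eq_or_lt_of_le h3 with he | hl
        · have he1 : π ⟨j, hj⟩ = ⟨s, hlt⟩ := Fin.ext he.symm
          have he2 : (⟨j, hj⟩ : Fin n) = M := by
            rw [hM, Equiv.eq_symm_apply]; exact he1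
          have : j = (M : ℕ) := congrArg Fin.val he2
          omega
        · set i := (π ⟨j, hj⟩ : ℕ) - 1 with hi
          have hin : i < n := by omega
          have hiv := ih i (by omega) (by omega) (by omega) hin
          have he : π ⟨i, hin⟩ = π ⟨j, hj⟩ := Fin.ext (by omega)
          have := congrArg Fin.val (π.injective he)
          simp only [Fin.val_mk] at this
          omega
    have hMst : (M : ℕ) ≤ s + t := by
      have := (hπ M).1
      omega
    have hmap' : ∀ i : Fin n, (M : ℕ) + 1 ≤ (π i : ℕ) ↔ (M : ℕ) + 1 ≤ (i : ℕ) := by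
      intro i
      constructor
      · intro h
        by_contra hcon
        push_neg at hcon
        rcases lt_or_ge (i : ℕ) s with hc | hc
        · have : ¬ s ≤ (π i : ℕ) := fun hh => by have := (hmap i).mp hh; omega
          omega
        · rcases eq_or_lt_of_le (show (i:ℕ) ≤ (M:ℕ) by omega) with he | hl
          · have : i = M := Fin.ext he
            rw [this, hπMv] at h; omega
          · have h2 := hstep i hc hl i.isLt
            have : (π i : ℕ) = (i : ℕ) + 1 := by rw [← h2]
            omega
      · intro h
        by_contra hcon
        push_neg at hcon
        have hs1 : s ≤ (π i : ℕ) := (hmap i).mpr (by omega)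
        rcases eq_or_lt_of_le hs1 with he | hl
        · have he1 : π i = ⟨s, hlt⟩ := Fin.ext he.symm
          have he2 : i = M := by rw [hM, Equiv.eq_symm_apply]; exact he1
          have : (i : ℕ) = (M : ℕ) := congrArg Fin.val he2
          omega
        · set i' := (π i : ℕ) - 1 with hi'
          have hin : i' < n := by omega
          have hiv := hstep i' (by omega) (by omega) hin
          have he : π ⟨i', hin⟩ = π i := Fin.ext (by omega)
          have := congrArg Fin.val (π.injective he)
          simp only [Fin.val_mk] at this
          omega
    obtain ⟨L', hsum', hbd', hblk'⟩ := aux_blocks n t π hπ ((M : ℕ) + 1) (by omega) hmap'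
    refine ⟨((M : ℕ) + 1 - s) :: L', by simp only [List.sum_cons, hsum']; omega, ?_, ?_⟩
    · intro ℓ hℓ
      rcases List.mem_cons.mp hℓ with h | hmem
      · subst h; constructor <;> omega
      · exact hbd' ℓ hmem
    · intro k hk j hj1 hj2 hj
      cases k with
      | zero =>
        simp only [List.take_zero, List.sum_nil, Nat.add_zero] at hj1 ⊢
        have htk : (List.take 1 (((M : ℕ) + 1 - s) :: L')).sum = (M : ℕ) + 1 - s := by
          simp
        rw [htk] at hj2 ⊢
        rcases eq_or_lt_of_le (show j ≤ (M : ℕ) by omega) with he | hl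
        · have heq2 : (⟨j, hj⟩ : Fin n) = M := Fin.ext he
          rw [heq2, hπMv, if_neg (by omega)]
        · rw [if_pos (by omega)]
          exact hstep j hj1 hl hj
      | succ k' =>
        have htk : ∀ m : ℕ, s + (List.take (m + 1) (((M : ℕ) + 1 - s) :: L')).sum
            = (M : ℕ) + 1 + (List.take m L').sum := by
          intro m
          simp only [List.take_succ_cons, List.sum_cons]
          omega
        rw [htk] at hj1 hj2
        rw [htk]
        have := hblk' k' (by simpa using hk) j hj1 hj2 hj
        rw [this]
        rw [htk]
  termination_by n - s

/-- Every permutation π of [n] with -t ≤ π(i) - i ≤ 1 for all i is a product of disjoint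
cycles, each acting on a set of consecutive integers of size at most t + 1, cyclically
shifting them. -/
theorem stmt_19 (n t : ℕ) (ht : 1 ≤ t) (π : Equiv.Perm (Fin n))
    (hπ : ∀ i : Fin n, -(t : ℤ) ≤ (π i : ℤ) - (i : ℤ) ∧ (π i : ℤ) - (i : ℤ) ≤ 1) :
    ∃ L : List ℕ, (∀ ℓ ∈ L, ℓ ≤ t + 1) ∧ IsConsecBlockCycles n π L := by
  obtain ⟨L, hsum, hbd, hblk⟩ := aux_blocks n t π hπ 0 (Nat.zero_le n) (by simp)
  refine ⟨L, fun ℓ hℓ => (hbd ℓ hℓ).2, by omega, fun ℓ hℓ => (hbd ℓ hℓ).1, ?_⟩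
  intro k hk j hj1 hj2 hj
  have := hblk k hk j (by omega) (by omega) hj
  simpa using this
end
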